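/- Let F be a field, X = (X₁, …, X_k) a tuple of pairwise disjoint sets of variables, n ≥ 1, and f ∈ F⟨X₁⟩ ⊗_F ⋯ ⊗_F F⟨X_k⟩ of degree strictly less than n. If Ψₙ(f) = (Ψₙ^{X₁} ⊗ ⋯ ⊗ Ψₙ^{X_k})(f) = 0, then f = 0. Equivalently, the restriction of Ψₙ to elements of degree less than n is injective. -/

import Mathlib

open scoped TensorProduct PiTensorProduct

set_option synthInstance.maxHeartbeats 1000000
set_option maxHeartbeats 1000000

noncomputable def psiHom (F : Type*) [Field F] (X : Type*) (n : ℕ) :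
    FreeAlgebra F X →ₐ[F] Matrix (Fin n) (Fin n) (FreeAlgebra F (X × Fin n × Fin n)) :=
  FreeAlgebra.lift F fun x => Matrix.of fun i j =>
    if (i : ℕ) + 1 = (j : ℕ) then FreeAlgebra.ι F (x, i, j) else 0

namespace PsiAux

/-- Addition on `Fin n` with wrap-around. -/
def finAdd {n : ℕ} (a : Fin n) (ℓ : ℕ) : Fin n :=
  ⟨((a : ℕ) + ℓ) % n, Nat.mod_lt _ a.pos⟩

lemma finAdd_val {n : ℕ} (a : Fin n) (ℓ : ℕ) (h : (a : ℕ) + ℓ < n) :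
    ((finAdd a ℓ : Fin n) : ℕ) = a + ℓ := Nat.mod_eq_of_lt h

/-- A matrix supported on the `ℓ`-th superdiagonal. -/
def shiftMatrix {A : Type*} [Semiring A] (n ℓ : ℕ) (u : Fin n → A) :
    Matrix (Fin n) (Fin n) A :=
  Matrix.of fun a b => if (b : ℕ) = (a : ℕ) + ℓ then u a else 0

lemma shiftMatrix_apply {A : Type*} [Semiring A] {n ℓ : ℕ} (u : Fin n → A) (a b : Fin n) :
    shiftMatrix n ℓ u a b = if (b : ℕ) = (a : ℕ) + ℓ then u a else 0 := rfl

lemma shiftMatrix_one {A : Type*} [Semiring A] (n : ℕ) :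
    shiftMatrix n 0 (fun _ => (1 : A)) = 1 := by
  ext a b
  simp [shiftMatrix_apply, Matrix.one_apply, Fin.ext_iff, eq_comm]

lemma shiftMatrix_mul {A : Type*} [Semiring A] {n ℓ ℓ' : ℕ} (u u' : Fin n → A) :
    shiftMatrix n ℓ u * shiftMatrix n ℓ' u' =
      shiftMatrix n (ℓ + ℓ') (fun a => u a * u' (finAdd a ℓ)) := by
  ext a b
  rw [Matrix.mul_apply, Finset.sum_eq_single (finAdd a ℓ)]
  · by_cases h : (a : ℕ) + ℓ < n
    · have hf := finAdd_val a ℓ h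
      simp [shiftMatrix_apply, hf, mul_ite, Nat.add_assoc]
    · have h1 : ((finAdd a ℓ : Fin n) : ℕ) ≠ (a : ℕ) + ℓ := by
        have := (finAdd a ℓ).isLt; omega
      have h2 : (b : ℕ) ≠ (a : ℕ) + (ℓ + ℓ') := by
        have := b.isLt; omega
      simp [shiftMatrix_apply, h1, h2]
  · intro c _ hc
    rcases eq_or_ne ((c : ℕ)) ((a : ℕ) + ℓ) with h | h
    · exact absurd (Fin.ext (h.trans (finAdd_val a ℓ (h ▸ c.isLt)).symm)) hc
    · simp [shiftMatrix_apply, h]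
  · simp

/-- The word in the `t`-variables corresponding to a word `w` starting at row `a`. -/
def tWord {X : Type*} {n : ℕ} : List X → Fin n → List (X × Fin n × Fin n)
  | [], _ => []
  | x :: w, a => (x, a, finAdd a 1) :: tWord w (finAdd a 1)

lemma tWord_map_fst {X : Type*} {n : ℕ} (w : List X) (a : Fin n) :
    (tWord w a).map Prod.fst = w := by
  induction w generalizing a with
  | nil => rfl
  | cons x w ih => simp [tWord, ih]

variable (F : Type*) [Field F]

lemma psiHom_ι (X : Type*) (n : ℕ) (x : X) :
    psiHom F X n (FreeAlgebra.ι F x) =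
      shiftMatrix n 1 (fun a => FreeAlgebra.ι F (x, a, finAdd a 1)) := by
  rw [psiHom, FreeAlgebra.lift_ι_apply]
  ext a b
  simp only [Matrix.of_apply, shiftMatrix_apply]
  by_cases h : (b : ℕ) = (a : ℕ) + 1
  · have hb : b = finAdd a 1 := Fin.ext (by rw [h, finAdd_val a 1 (h ▸ b.isLt)])
    simp [h, hb, h.symm]
  · simp only [if_neg h, if_neg (fun hh : (a : ℕ) + 1 = (b : ℕ) => h hh.symm)]

lemma psiHom_word (X : Type*) (n : ℕ) (w : List X) :
    psiHom F X n (FreeMonoid.lift (FreeAlgebra.ι F) (FreeMonoid.ofList w)) =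
      shiftMatrix n w.length
        (fun a => FreeMonoid.lift (FreeAlgebra.ι F) (FreeMonoid.ofList (tWord w a))) := by
  induction w with
  | nil =>
      have : (FreeMonoid.ofList ([] : List X)) = 1 := rfl
      rw [this, map_one, map_one, ← shiftMatrix_one (A := FreeAlgebra F (X × Fin n × Fin n)) n]
      rfl
  | cons x w ih =>
      rw [FreeMonoid.ofList_cons, map_mul, map_mul, FreeMonoid.lift_eval_of, psiHom_ι, ih,
        shiftMatrix_mul]
      have hlen : 1 + w.length = (x :: w).length := by simp [Nat.add_comm]
      have harg : (fun a : Fin n => FreeAlgebra.ι F (x, a, finAdd a 1) *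
            FreeMonoid.lift (FreeAlgebra.ι F) (FreeMonoid.ofList (tWord w (finAdd a 1)))) =
          fun a => FreeMonoid.lift (FreeAlgebra.ι F) (FreeMonoid.ofList (tWord (x :: w) a)) := by
        funext a
        rw [show tWord (x :: w) a = (x, a, finAdd a 1) :: tWord w (finAdd a 1) from rfl,
          FreeMonoid.ofList_cons, map_mul, FreeMonoid.lift_eval_of]
      rw [← hlen, harg]

/-- The coefficient of the monomial `v` in an element of the free algebra. -/
noncomputable def coordAt {X : Type*} (v : FreeMonoid X) : FreeAlgebra F X →ₗ[F] F :=
  Finsupp.lapply v ∘ₗ ((MonoidAlgebra.coeffLinearEquiv F).toLinearMap ∘ₗ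
    (FreeAlgebra.equivMonoidAlgebraFreeMonoid (R := F) (X := X)).toLinearMap)

lemma equiv_word {X : Type*} (w : List X) :
    FreeAlgebra.equivMonoidAlgebraFreeMonoid
        (FreeMonoid.lift (FreeAlgebra.ι F) (FreeMonoid.ofList w)) =
      MonoidAlgebra.single (FreeMonoid.ofList w) (1 : F) := by
  induction w with
  | nil =>
      have : (FreeMonoid.ofList ([] : List X)) = 1 := rfl
      rw [this, map_one, map_one, MonoidAlgebra.one_def]
  | cons x w ih =>
      rw [FreeMonoid.ofList_cons, map_mul, map_mul, FreeMonoid.lift_eval_of, ih]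
      have hx : FreeAlgebra.equivMonoidAlgebraFreeMonoid (FreeAlgebra.ι F x) =
          MonoidAlgebra.single (FreeMonoid.of x) (1 : F) := by
        simp [FreeAlgebra.equivMonoidAlgebraFreeMonoid, MonoidAlgebra.of_apply]
      rw [hx, MonoidAlgebra.single_mul_single, one_mul]

open scoped Classical in
lemma coordAt_word {X : Type*} (w v : List X) :
    coordAt F (FreeMonoid.ofList v) (FreeMonoid.lift (FreeAlgebra.ι F) (FreeMonoid.ofList w)) =
      if w = v then 1 else 0 := by
  rw [coordAt, LinearMap.comp_apply, LinearMap.comp_apply]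
  have h : (FreeAlgebra.equivMonoidAlgebraFreeMonoid (R := F) (X := X)).toLinearMap
      ((FreeMonoid.lift (FreeAlgebra.ι F)) (FreeMonoid.ofList w)) =
      MonoidAlgebra.single (FreeMonoid.ofList w) (1 : F) := equiv_word F w
  erw [h, Finsupp.lapply_apply]
  change (MonoidAlgebra.single (FreeMonoid.ofList w) (1 : F)).coeff (FreeMonoid.ofList v) = _
  rw [MonoidAlgebra.coeff_single, Finsupp.single_apply]
  simp [FreeMonoid.ofList.apply_eq_iff_eq]

end PsiAux

open PsiAux in
/-- `Ψₙ` injective on low degree. -/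
theorem eq_zero_of_psiHom_tensor_eq_zero
    (F : Type*) [Field F] (k : ℕ) (X : Fin k → Type*) (n : ℕ) (hn : 1 ≤ n)
    (f : ⨂[F] i, FreeAlgebra F (X i))
    (hdeg : f ∈ Submodule.span F
      {g : ⨂[F] i, FreeAlgebra F (X i) |
        ∃ m : Π i, FreeMonoid (X i), (∑ i, (m i).length) < n ∧
          g = ⨂ₜ[F] i, FreeMonoid.lift (FreeAlgebra.ι F) (m i)})
    (hpsi : PiTensorProduct.map (fun i => (psiHom F (X i) n).toLinearMap) f = 0) :
    f = 0 := by
  classical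
  haveI : NeZero n := ⟨by omega⟩
  obtain ⟨c, hsupp, hsum⟩ := Submodule.mem_span_set.mp hdeg
  have hchoose : ∀ g ∈ c.support, ∃ m : Π i, FreeMonoid (X i),
      (∑ i, (m i).length) < n ∧
      g = ⨂ₜ[F] i, FreeMonoid.lift (FreeAlgebra.ι F) (m i) := fun g hg => hsupp hg
  choose! μ hμlt hμeq using hchoose
  suffices hc : c = 0 by
    rw [← hsum, hc, Finsupp.sum_zero_index]
  ext g₀
  simp only [Finsupp.coe_zero, Pi.zero_apply]
  by_cases hg₀ : g₀ ∈ c.support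
  swap
  · exact Finsupp.notMem_support_iff.mp hg₀
  set m₀ : Π i, FreeMonoid (X i) := μ g₀ with hm₀
  have hlen : ∀ i, (m₀ i).length < n := fun i =>
    lt_of_le_of_lt
      (Finset.single_le_sum (f := fun i => (m₀ i).length) (fun _ _ => Nat.zero_le _)
        (Finset.mem_univ i))
      (hμlt g₀ hg₀)
  set φ : Π i, Matrix (Fin n) (Fin n) (FreeAlgebra F (X i × Fin n × Fin n)) →ₗ[F] F :=
    fun i => coordAt F (FreeMonoid.ofList (tWord (FreeMonoid.toList (m₀ i)) 0)) ∘ₗ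
      Matrix.entryLinearMap F _ 0 ⟨(m₀ i).length, hlen i⟩ with hφ
  set Λ : (⨂[F] i, Matrix (Fin n) (Fin n) (FreeAlgebra F (X i × Fin n × Fin n))) →ₗ[F] F :=
    PiTensorProduct.lift ((MultilinearMap.mkPiAlgebra F (Fin k) F).compLinearMap φ) with hΛ
  have factor : ∀ (i : Fin k) (w : FreeMonoid (X i)),
      φ i (psiHom F (X i) n (FreeMonoid.lift (FreeAlgebra.ι F) w)) =
        if w = m₀ i then 1 else 0 := by
    intro i w
    rw [hφ]
    simp only [LinearMap.comp_apply, Matrix.entryLinearMap_apply]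
    conv_lhs => rw [← FreeMonoid.ofList_toList w, psiHom_word, shiftMatrix_apply]
    simp only [FreeMonoid.ofList_toList, Fin.val_zero, Nat.zero_add]
    by_cases hl : ((⟨(m₀ i).length, hlen i⟩ : Fin n) : ℕ) = (FreeMonoid.toList w).length
    · rw [if_pos hl, coordAt_word]
      by_cases hw : w = m₀ i
      · simp [hw]
      · rw [if_neg hw, if_neg]
        intro he
        apply hw
        have h2 := congrArg (List.map Prod.fst) he
        rw [tWord_map_fst, tWord_map_fst] at h2
        exact FreeMonoid.toList.injective h2
    · rw [if_neg hl, map_zero, if_neg]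
      intro hw
      exact hl (by rw [hw]; rfl)
  have key : ∀ m : Π i, FreeMonoid (X i),
      Λ (PiTensorProduct.map (fun i => (psiHom F (X i) n).toLinearMap)
          (⨂ₜ[F] i, FreeMonoid.lift (FreeAlgebra.ι F) (m i)))
        = if m = m₀ then 1 else 0 := by
    intro m
    rw [PiTensorProduct.map_tprod, hΛ, PiTensorProduct.lift.tprod]
    simp only [MultilinearMap.compLinearMap_apply, MultilinearMap.mkPiAlgebra_apply,
      AlgHom.toLinearMap_apply]
    by_cases hm : m = m₀
    · rw [if_pos hm]
      subst hm
      rw [Finset.prod_eq_one]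
      intro i _
      rw [factor, if_pos rfl]
    · rw [if_neg hm]
      obtain ⟨i, hi⟩ : ∃ i, m i ≠ m₀ i := by
        by_contra h
        push_neg at h
        exact hm (funext h)
      exact Finset.prod_eq_zero (Finset.mem_univ i) (by rw [factor, if_neg hi])
  have h1 : Λ (PiTensorProduct.map (fun i => (psiHom F (X i) n).toLinearMap) f) = 0 := by
    rw [hpsi, map_zero]
  rw [← hsum, Finsupp.sum, map_sum, map_sum] at h1
  rw [← h1]
  rw [Finset.sum_eq_single g₀]
  · rw [map_smul, map_smul, hμeq g₀ hg₀, key, if_pos rfl, smul_eq_mul, mul_one]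
  · intro g hg hne
    rw [map_smul, map_smul, hμeq g hg, key, if_neg, smul_zero]
    intro he
    apply hne
    rw [hμeq g hg, he, ← hμeq g₀ hg₀]
  · intro h
    exact absurd hg₀ h
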